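/- For m ≥ 0, removing any family of at most 2 pairwise vertex-disjoint subcubes, each of dimension at most m, from Q_{m+3} leaves a connected graph of diameter at most m+4. -/

import Mathlib

open SimpleGraph

/-- The `n`-dimensional hypercube: vertices are `Fin n → Bool`,
adjacent iff Hamming distance is `1`. -/
def Q (n : ℕ) : SimpleGraph (Fin n → Bool) where
  Adj u v := hammingDist u v = 1
  symm := ⟨fun u v (h : hammingDist u v = 1) => show hammingDist v u = 1 by rwa [hammingDist_comm]⟩
  loopless := ⟨fun u h => by simp [hammingDist_self] at h⟩

/-- Flip the `i`-th bit of `x`. -/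
def flipBit {n : ℕ} (x : Fin n → Bool) (i : Fin n) : Fin n → Bool :=
  Function.update x i (!x i)

/-- `S` is a subcube of dimension exactly `m` (fixing `n - m` coordinates). -/
def IsSubcube {n : ℕ} (m : ℕ) (S : Set (Fin n → Bool)) : Prop :=
  ∃ A : Finset (Fin n), A.card = n - m ∧ ∃ p : Fin n → Bool,
    S = {x | ∀ i ∈ A, x i = p i}

/-- `S` is a subcube of dimension at most `m` (fixing at least `n - m` coordinates). -/
def IsSubcubeLe {n : ℕ} (m : ℕ) (S : Set (Fin n → Bool)) : Prop :=
  ∃ A : Finset (Fin n), n - m ≤ A.card ∧ ∃ p : Fin n → Bool,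
    S = {x | ∀ i ∈ A, x i = p i}

namespace HypercubeAux

variable {n : ℕ}

lemma bool_eq_of_ne_ne {a c b : Bool} (h1 : a ≠ b) (h2 : c ≠ b) : a = c := by
  revert h1 h2; revert a b c; decide

lemma bool_ne_of_ne {a b : Bool} (h : a ≠ b) : a = !b := by
  revert h; revert a b; decide

lemma flipBit_self (x : Fin n → Bool) (i : Fin n) : flipBit x i i = !x i := by
  simp [flipBit]

lemma flipBit_ne (x : Fin n → Bool) {i j : Fin n} (h : j ≠ i) : flipBit x i j = x j := by
  simp [flipBit, Function.update_of_ne h]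

lemma adj_flipBit (x : Fin n → Bool) (i : Fin n) : (Q n).Adj x (flipBit x i) := by
  show hammingDist x (flipBit x i) = 1
  unfold hammingDist
  have h : (Finset.univ.filter fun j => x j ≠ flipBit x i j) = {i} := by
    ext j
    simp only [Finset.mem_filter, Finset.mem_univ, true_and, Finset.mem_singleton]
    by_cases hj : j = i
    · subst hj; simp [flipBit_self]
    · simp [flipBit_ne x hj, hj]
  rw [h, Finset.card_singleton]

lemma hamming_le (x y : Fin n → Bool) (s : Finset (Fin n)) (h : ∀ i ∈ s, x i = y i) :
    hammingDist x y ≤ n - s.card := by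
  unfold hammingDist
  have hsub : (Finset.univ.filter fun j => x j ≠ y j) ⊆ Finset.univ \ s := by
    intro j hj
    simp only [Finset.mem_filter, Finset.mem_univ, true_and] at hj
    simp only [Finset.mem_sdiff, Finset.mem_univ, true_and]
    exact fun hjs => hj (h j hjs)
  calc (Finset.univ.filter fun j => x j ≠ y j).card ≤ (Finset.univ \ s).card :=
        Finset.card_le_card hsub
    _ = n - s.card := by
        rw [Finset.card_sdiff_of_subset (Finset.subset_univ s), Finset.card_univ, Fintype.card_fin]

/-- A geodesic walk between `x` and `y` whose vertices all lie in the interval `[x, y]`. -/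
lemma exists_geodesic : ∀ (d : ℕ) (x y : Fin n → Bool), hammingDist x y = d →
    ∃ w : (Q n).Walk x y, w.length = d ∧ ∀ z ∈ w.support, ∀ i, z i = x i ∨ z i = y i := by
  intro d
  induction d with
  | zero =>
    intro x y h
    have hxy : x = y := hammingDist_eq_zero.mp h
    subst hxy
    exact ⟨Walk.nil, by simp, by intro z hz i; simp at hz; subst hz; left; rfl⟩
  | succ d ih =>
    intro x y h
    have hpos : 0 < hammingDist x y := by omega
    have hne : ∃ i, x i ≠ y i := by
      by_contra hc
      push_neg at hc
      have : x = y := funext hc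
      subst this
      simp [hammingDist_self] at hpos
    obtain ⟨i, hi⟩ := hne
    set x' := Function.update x i (y i) with hx'
    have hmem : i ∈ Finset.univ.filter fun j => x j ≠ y j := by
      simp [hi]
    have hfilter : (Finset.univ.filter fun j => x' j ≠ y j) =
        (Finset.univ.filter fun j => x j ≠ y j).erase i := by
      ext j
      simp only [Finset.mem_filter, Finset.mem_univ, true_and, Finset.mem_erase]
      by_cases hj : j = i
      · subst hj; simp [hx', Function.update_self]
      · simp [hx', Function.update_of_ne hj, hj]
    have hd' : hammingDist x' y = d := by
      unfold hammingDist
      rw [hfilter, Finset.card_erase_of_mem hmem]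
      unfold hammingDist at h
      omega
    have hadj : (Q n).Adj x x' := by
      have : x' = flipBit x i := by
        funext j
        by_cases hj : j = i
        · subst hj
          rw [hx', Function.update_self, flipBit_self, bool_ne_of_ne hi]
          simp
        · rw [hx', Function.update_of_ne hj, flipBit_ne x hj]
      rw [this]; exact adj_flipBit x i
    obtain ⟨w', hw'len, hw'sup⟩ := ih x' y hd'
    refine ⟨Walk.cons hadj w', by simp [hw'len], ?_⟩
    intro z hz i'
    rw [Walk.support_cons] at hz
    rcases List.mem_cons.mp hz with hz | hz
    · subst hz; left; rfl
    · rcases hw'sup z hz i' with hz' | hz'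
      · by_cases hji : i' = i
        · subst hji; right; rw [hz', hx', Function.update_self]
        · left; rw [hz', hx', Function.update_of_ne hji]
      · right; exact hz'

/-- Compose: walk to `x'`, geodesic from `x'` to `y'`, walk from `y'`. -/
lemma sandwich {K : Set (Fin n → Bool)} {x x' y y' : Fin n → Bool}
    (wx : (Q n).Walk x x') (wy : (Q n).Walk y' y)
    (hx : ∀ z ∈ wx.support, z ∉ K) (hy : ∀ z ∈ wy.support, z ∉ K)
    (hmid : ∀ z : Fin n → Bool, (∀ i, z i = x' i ∨ z i = y' i) → z ∉ K) :
    ∃ w : (Q n).Walk x y, w.length ≤ wx.length + hammingDist x' y' + wy.length ∧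
      ∀ z ∈ w.support, z ∉ K := by
  obtain ⟨g, hg1, hg2⟩ := exists_geodesic (hammingDist x' y') x' y' rfl
  refine ⟨(wx.append g).append wy, ?_, ?_⟩
  · simp [Walk.length_append, hg1]
  · intro z hz
    rw [Walk.mem_support_append_iff] at hz
    rcases hz with hz | hz
    · rw [Walk.mem_support_append_iff] at hz
      rcases hz with hz | hz
      · exact hx z hz
      · exact hmid z (hg2 z hz)
    · exact hy z hz

/-- Flip coordinate `i` away from value `b` if necessary. -/
def flipIf (x : Fin n → Bool) (i : Fin n) (b : Bool) : Fin n → Bool :=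
  if x i = b then flipBit x i else x

lemma flipIf_ne (x : Fin n → Bool) (i : Fin n) (b : Bool) : flipIf x i b i ≠ b := by
  unfold flipIf
  split
  · rename_i h; rw [flipBit_self, h]; simp
  · assumption

lemma flipIf_eq (x : Fin n → Bool) {i j : Fin n} (b : Bool) (h : j ≠ i) :
    flipIf x i b j = x j := by
  unfold flipIf
  split
  · exact flipBit_ne x h
  · rfl

lemma walk_flipIf (x : Fin n → Bool) (i : Fin n) (b : Bool) :
    ∃ w : (Q n).Walk x (flipIf x i b), w.length ≤ 1 ∧
      ∀ z ∈ w.support, z = x ∨ z = flipIf x i b := by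
  by_cases h : x i = b
  · have he : flipIf x i b = flipBit x i := by simp [flipIf, h]
    rw [he]
    refine ⟨Walk.cons (adj_flipBit x i) Walk.nil, by simp, ?_⟩
    intro z hz
    simp only [Walk.support_cons, Walk.support_nil, List.mem_cons, List.mem_singleton,
      List.not_mem_nil, or_false] at hz
    tauto
  · have he : flipIf x i b = x := by simp [flipIf, h]
    rw [he]
    refine ⟨Walk.nil, by simp, ?_⟩
    intro z hz
    simp only [Walk.support_nil, List.mem_singleton] at hz
    tauto


/-- The subcube fixing coordinates in `A` to the pattern `p`. -/
def Cube (A : Finset (Fin n)) (p : Fin n → Bool) : Set (Fin n → Bool) :=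
  {x | ∀ i ∈ A, x i = p i}

lemma mem_Cube {A : Finset (Fin n)} {p z : Fin n → Bool} :
    z ∈ Cube A p ↔ ∀ i ∈ A, z i = p i := Iff.rfl

lemma not_mem_Cube {A : Finset (Fin n)} {p z : Fin n → Bool} :
    z ∉ Cube A p ↔ ∃ i ∈ A, z i ≠ p i := by
  simp [Cube]

lemma bool_ne_not_self (a : Bool) : a ≠ !a := by cases a <;> decide

lemma bool_eq_of_ne_not {a b : Bool} (h : a ≠ !b) : a = b := by
  revert h; cases a <;> cases b <;> decide

lemma exists_split {A B : Finset (Fin n)} {p q : Fin n → Bool}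
    (hd : Disjoint (Cube A p) (Cube B q)) :
    ∃ c, c ∈ A ∧ c ∈ B ∧ q c = !p c := by
  by_contra hc
  push_neg at hc
  have hagree : ∀ i, i ∈ A → i ∈ B → q i = p i := fun i hiA hiB =>
    bool_eq_of_ne_not (hc i hiA hiB)
  set z : Fin n → Bool := fun i => if i ∈ A then p i else q i with hz
  have hzS : z ∈ Cube A p := by
    intro i hi; simp [hz, hi]
  have hzT : z ∈ Cube B q := by
    intro i hi
    by_cases hiA : i ∈ A
    · simp [hz, hiA, hagree i hiA hi]
    · simp [hz, hiA]
  exact Set.disjoint_left.mp hd hzS hzT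

/-- Routing around one fault using a single safe coordinate. -/
lemma single {K : Set (Fin n → Bool)} (hn : 1 ≤ n) (j : Fin n) (b : Bool)
    (x y : Fin n → Bool)
    (hK : ∀ z, z j ≠ b → z ∉ K) (hxK : x ∉ K) (hyK : y ∉ K) :
    ∃ w : (Q n).Walk x y, w.length ≤ n + 1 ∧ ∀ z ∈ w.support, z ∉ K := by
  obtain ⟨wx, hwx1, hwx2⟩ := walk_flipIf x j b
  obtain ⟨wy0, hwy1, hwy2⟩ := walk_flipIf y j b
  obtain ⟨w, hw1, hw2⟩ := sandwich (K := K) wx wy0.reverse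
    (by
      intro z hz
      rcases hwx2 z hz with h | h
      · subst h; exact hxK
      · subst h; exact hK _ (flipIf_ne x j b))
    (by
      intro z hz
      rw [Walk.support_reverse, List.mem_reverse] at hz
      rcases hwy2 z hz with h | h
      · subst h; exact hyK
      · subst h; exact hK _ (flipIf_ne y j b))
    (by
      intro z hz
      refine hK z ?_
      rcases hz j with h | h
      · rw [h]; exact flipIf_ne x j b
      · rw [h]; exact flipIf_ne y j b)
  have hd : hammingDist (flipIf x j b) (flipIf y j b) ≤ n - 1 := by
    have := hamming_le (flipIf x j b) (flipIf y j b) {j}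
      (by
        intro i hi
        rw [Finset.mem_singleton] at hi
        rw [hi]
        exact bool_eq_of_ne_ne (flipIf_ne x j b) (flipIf_ne y j b))
    simpa using this
  refine ⟨w, ?_, hw2⟩
  have := Walk.length_reverse wy0
  omega

/-- Routing inside a half-cube `z c = x c` around one fault using safe coordinate `j`. -/
lemma half {K : Set (Fin n → Bool)} (hn : 2 ≤ n) (c j : Fin n) (hjc : j ≠ c) (b : Bool)
    (x y : Fin n → Bool) (hxc : x c = y c)
    (hK : ∀ z, z c = x c → z j ≠ b → z ∉ K) (hxK : x ∉ K) (hyK : y ∉ K) :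
    ∃ w : (Q n).Walk x y, w.length ≤ n ∧ ∀ z ∈ w.support, z ∉ K := by
  have hcx : (flipIf x j b) c = x c := flipIf_eq x b (Ne.symm hjc)
  have hcy : (flipIf y j b) c = y c := flipIf_eq y b (Ne.symm hjc)
  obtain ⟨wx, hwx1, hwx2⟩ := walk_flipIf x j b
  obtain ⟨wy0, hwy1, hwy2⟩ := walk_flipIf y j b
  obtain ⟨w, hw1, hw2⟩ := sandwich (K := K) wx wy0.reverse
    (by
      intro z hz
      rcases hwx2 z hz with h | h
      · subst h; exact hxK
      · subst h; exact hK _ hcx (flipIf_ne x j b))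
    (by
      intro z hz
      rw [Walk.support_reverse, List.mem_reverse] at hz
      rcases hwy2 z hz with h | h
      · subst h; exact hyK
      · subst h; exact hK _ (by rw [hcy, hxc]) (flipIf_ne y j b))
    (by
      intro z hz
      refine hK z ?_ ?_
      · rcases hz c with h | h
        · rw [h, hcx]
        · rw [h, hcy, hxc]
      · rcases hz j with h | h
        · rw [h]; exact flipIf_ne x j b
        · rw [h]; exact flipIf_ne y j b)
  have hd : hammingDist (flipIf x j b) (flipIf y j b) ≤ n - 2 := by
    have hcard : ({c, j} : Finset (Fin n)).card = 2 := by
      rw [Finset.card_insert_of_notMem (by simpa using Ne.symm hjc), Finset.card_singleton]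
    have := hamming_le (flipIf x j b) (flipIf y j b) {c, j}
      (by
        intro i hi
        rcases Finset.mem_insert.mp hi with hi | hi
        · rw [hi, hcx, hcy, hxc]
        · rw [Finset.mem_singleton] at hi
          rw [hi]
          exact bool_eq_of_ne_ne (flipIf_ne x j b) (flipIf_ne y j b))
    rwa [hcard] at this
  refine ⟨w, ?_, hw2⟩
  have := Walk.length_reverse wy0
  omega

/-- Routing between the two halves determined by the splitting coordinate `c`. -/
lemma cross {K : Set (Fin n → Bool)} (hn : 2 ≤ n)
    (A B : Finset (Fin n)) (p q : Fin n → Bool) (c j₁ j₂ : Fin n)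
    (hcA : c ∈ A) (hcB : c ∈ B) (hj₁ : j₁ ∈ A) (hj₂ : j₂ ∈ A)
    (hj₁c : j₁ ≠ c) (hj₂c : j₂ ≠ c) (hj₁₂ : j₁ ≠ j₂) (hqc : q c = !p c)
    (x y : Fin n → Bool) (hxc : x c = p c) (hyc : y c = !p c)
    (hxS : x ∉ Cube A p) (hyT : y ∉ Cube B q)
    (hK : ∀ z, z ∉ Cube A p → z ∉ Cube B q → z ∉ K)
    (hxK : x ∉ K) (hyK : y ∉ K) :
    ∃ w : (Q n).Walk x y, w.length ≤ n + 1 ∧ ∀ z ∈ w.support, z ∉ K := by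
  have hTc : ∀ z : Fin n → Bool, z c = p c → z ∉ Cube B q := by
    intro z h hz
    have := mem_Cube.mp hz c hcB
    rw [h, hqc] at this
    exact bool_ne_not_self _ this
  have hSc : ∀ z : Fin n → Bool, z c = !p c → z ∉ Cube A p := by
    intro z h hz
    have := mem_Cube.mp hz c hcA
    rw [h] at this
    exact bool_ne_not_self _ this.symm
  by_cases hy1 : flipBit y c ∈ Cube A p
  · -- the neighbour of `y` across the `c`-hyperplane is faulty; detour via a coordinate of `A`
    have hagree : ∀ i ∈ A, i ≠ c → y i = p i := by
      intro i hi hic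
      have := mem_Cube.mp hy1 i hi
      rwa [flipBit_ne y hic] at this
    have hchoice : ∃ j, j ∈ A ∧ j ≠ c ∧ flipBit y j ∉ Cube B q := by
      by_cases h1 : flipBit y j₁ ∈ Cube B q
      · refine ⟨j₂, hj₂, hj₂c, fun h2 => ?_⟩
        obtain ⟨i, hiB, hiy⟩ := not_mem_Cube.mp hyT
        have hij : i = j₁ := by
          by_contra hne
          exact hiy (by rw [← flipBit_ne y hne]; exact mem_Cube.mp h1 i hiB)
        subst hij
        have h2' := mem_Cube.mp h2 i hiB
        rw [flipBit_ne y hj₁₂] at h2'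
        exact hiy h2'
      · exact ⟨j₁, hj₁, hj₁c, h1⟩
    obtain ⟨j, hjA, hjc, hfT⟩ := hchoice
    set y₂ := flipBit y j with hy₂
    set y₃ := flipBit y₂ c with hy₃
    have hy₂c : y₂ c = !p c := by rw [hy₂, flipBit_ne y (Ne.symm hjc), hyc]
    have hy₂S : y₂ ∉ Cube A p := hSc y₂ hy₂c
    have hy₂K : y₂ ∉ K := hK y₂ hy₂S hfT
    have hy₃c : y₃ c = p c := by rw [hy₃, flipBit_self, hy₂c, Bool.not_not]
    have hy₃j : y₃ j = !p j := by
      rw [hy₃, flipBit_ne y₂ hjc, hy₂, flipBit_self, hagree j hjA hjc]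
    have hy₃S : y₃ ∉ Cube A p := by
      intro hz
      have := mem_Cube.mp hz j hjA
      rw [hy₃j] at this
      exact bool_ne_not_self _ this.symm
    have hy₃K : y₃ ∉ K := hK y₃ hy₃S (hTc y₃ hy₃c)
    have hx'c : (flipIf x j (p j)) c = p c := by
      rw [flipIf_eq x (p j) (Ne.symm hjc), hxc]
    have hx'S : flipIf x j (p j) ∉ Cube A p := by
      intro hz
      exact flipIf_ne x j (p j) (mem_Cube.mp hz j hjA)
    have hx'K : flipIf x j (p j) ∉ K := hK _ hx'S (hTc _ hx'c)
    obtain ⟨wx, hwx1, hwx2⟩ := walk_flipIf x j (p j)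
    obtain ⟨w, hw1, hw2⟩ := sandwich (K := K) wx
      (Walk.cons ((adj_flipBit y₂ c).symm) (Walk.cons ((adj_flipBit y j).symm) Walk.nil))
      (by
        intro z hz
        rcases hwx2 z hz with h | h
        · subst h; exact hxK
        · subst h; exact hx'K)
      (by
        intro z hz
        simp only [Walk.support_cons, Walk.support_nil, List.mem_cons,
          List.not_mem_nil, or_false] at hz
        rcases hz with h | h | h
        · subst h; exact hy₃K
        · subst h; exact hy₂K
        · subst h; exact hyK)
      (by
        intro z hz
        refine hK z ?_ ?_
        · intro hmem
          have hzj := mem_Cube.mp hmem j hjA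
          rcases hz j with h | h
          · rw [h] at hzj; exact flipIf_ne x j (p j) hzj
          · rw [h, ← hy₃, hy₃j] at hzj; exact bool_ne_not_self _ hzj.symm
        · refine hTc z ?_
          rcases hz c with h | h
          · rw [h, hx'c]
          · rw [h, ← hy₃, hy₃c])
    have hd : hammingDist (flipIf x j (p j)) (flipBit y₂ c) ≤ n - 2 := by
      have hcard : ({c, j} : Finset (Fin n)).card = 2 := by
        rw [Finset.card_insert_of_notMem (by simpa using Ne.symm hjc), Finset.card_singleton]
      have := hamming_le (flipIf x j (p j)) (flipBit y₂ c) {c, j}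
        (by
          intro i hi
          rcases Finset.mem_insert.mp hi with hi | hi
          · rw [hi, hx'c, ← hy₃]
            exact hy₃c.symm
          · rw [Finset.mem_singleton] at hi
            rw [hi, ← hy₃, hy₃j]
            exact bool_ne_of_ne (flipIf_ne x j (p j)))
      rwa [hcard] at this
    refine ⟨w, ?_, hw2⟩
    simp only [Walk.length_cons, Walk.length_nil] at hw1
    omega
  · -- the neighbour of `y` across the `c`-hyperplane is fine
    set y₁ := flipBit y c with hy₁
    have hy₁c : y₁ c = p c := by rw [hy₁, flipBit_self, hyc, Bool.not_not]
    have hy₁K : y₁ ∉ K := hK y₁ hy1 (hTc y₁ hy₁c)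
    have hy'c : (flipIf y₁ j₁ (p j₁)) c = p c := by
      rw [flipIf_eq y₁ (p j₁) (Ne.symm hj₁c), hy₁c]
    have hy'S : flipIf y₁ j₁ (p j₁) ∉ Cube A p := by
      intro hz
      exact flipIf_ne y₁ j₁ (p j₁) (mem_Cube.mp hz j₁ hj₁)
    have hy'K : flipIf y₁ j₁ (p j₁) ∉ K := hK _ hy'S (hTc _ hy'c)
    have hx'c : (flipIf x j₁ (p j₁)) c = p c := by
      rw [flipIf_eq x (p j₁) (Ne.symm hj₁c), hxc]
    have hx'S : flipIf x j₁ (p j₁) ∉ Cube A p := by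
      intro hz
      exact flipIf_ne x j₁ (p j₁) (mem_Cube.mp hz j₁ hj₁)
    have hx'K : flipIf x j₁ (p j₁) ∉ K := hK _ hx'S (hTc _ hx'c)
    obtain ⟨wx, hwx1, hwx2⟩ := walk_flipIf x j₁ (p j₁)
    obtain ⟨wy0, hwy1, hwy2⟩ := walk_flipIf y₁ j₁ (p j₁)
    obtain ⟨w, hw1, hw2⟩ := sandwich (K := K) wx
      (wy0.reverse.append (Walk.cons ((adj_flipBit y c).symm) Walk.nil))
      (by
        intro z hz
        rcases hwx2 z hz with h | h
        · subst h; exact hxK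
        · subst h; exact hx'K)
      (by
        intro z hz
        rw [Walk.mem_support_append_iff] at hz
        rcases hz with hz | hz
        · rw [Walk.support_reverse, List.mem_reverse] at hz
          rcases hwy2 z hz with h | h
          · subst h; exact hy₁K
          · subst h; exact hy'K
        · simp only [Walk.support_cons, Walk.support_nil, List.mem_cons,
            List.not_mem_nil, or_false] at hz
          rcases hz with h | h
          · subst h; exact hy₁K
          · subst h; exact hyK)
      (by
        intro z hz
        refine hK z ?_ ?_
        · intro hmem
          have hzj := mem_Cube.mp hmem j₁ hj₁
          rcases hz j₁ with h | h
          · rw [h] at hzj; exact flipIf_ne x j₁ (p j₁) hzj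
          · rw [h] at hzj; exact flipIf_ne y₁ j₁ (p j₁) hzj
        · refine hTc z ?_
          rcases hz c with h | h
          · rw [h, hx'c]
          · rw [h, hy'c])
    have hd : hammingDist (flipIf x j₁ (p j₁)) (flipIf y₁ j₁ (p j₁)) ≤ n - 2 := by
      have hcard : ({c, j₁} : Finset (Fin n)).card = 2 := by
        rw [Finset.card_insert_of_notMem (by simpa using Ne.symm hj₁c), Finset.card_singleton]
      have := hamming_le (flipIf x j₁ (p j₁)) (flipIf y₁ j₁ (p j₁)) {c, j₁}
        (by
          intro i hi
          rcases Finset.mem_insert.mp hi with hi | hi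
          · rw [hi, hx'c, hy'c]
          · rw [Finset.mem_singleton] at hi
            rw [hi]
            exact bool_eq_of_ne_ne (flipIf_ne x j₁ (p j₁)) (flipIf_ne y₁ j₁ (p j₁)))
      rwa [hcard] at this
    refine ⟨w, ?_, hw2⟩
    simp only [Walk.length_append, Walk.length_reverse, Walk.length_cons,
      Walk.length_nil] at hw1
    omega

/-- Lift a fault-avoiding walk to the induced subgraph. -/
lemma lift {s : Set (Fin n → Bool)} :
    ∀ {u v : Fin n → Bool} (w : (Q n).Walk u v), (∀ z ∈ w.support, z ∈ s) →
      ∀ (hu : u ∈ s) (hv : v ∈ s),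
      ∃ w' : ((Q n).induce s).Walk ⟨u, hu⟩ ⟨v, hv⟩, w'.length ≤ w.length := by
  intro u v w
  induction w with
  | nil =>
    intro _ hu hv
    exact ⟨Walk.nil, by simp⟩
  | cons hadj p ih =>
    rename_i a b cc
    intro hs ha hc
    have hb : b ∈ s := hs b (by
      rw [Walk.support_cons]
      exact List.mem_cons_of_mem _ p.start_mem_support)
    obtain ⟨w', hw'⟩ := ih (fun z hz => hs z (by
      rw [Walk.support_cons]
      exact List.mem_cons_of_mem _ hz)) hb hc
    exact ⟨Walk.cons (show ((Q n).induce s).Adj ⟨a, ha⟩ ⟨b, hb⟩ from hadj) w',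
      by simpa using Nat.succ_le_succ hw'⟩

end HypercubeAux

open HypercubeAux

theorem two_subcube_faults_mplus3 (m : ℕ)
    (F : Finset (Set (Fin (m + 3) → Bool))) (hcard : F.card ≤ 2)
    (hsub : ∀ S ∈ F, IsSubcubeLe m S)
    (hdisj : ∀ S ∈ F, ∀ T ∈ F, S ≠ T → Disjoint S T) :
    ((Q (m + 3)).induce (⋃₀ (↑F : Set (Set (Fin (m + 3) → Bool))))ᶜ).Connected ∧
    ∀ x y, ((Q (m + 3)).induce (⋃₀ (↑F : Set (Set (Fin (m + 3) → Bool))))ᶜ).dist x y ≤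
      m + 4 := by
  classical
  set K : Set (Fin (m + 3) → Bool) := ⋃₀ (↑F : Set (Set (Fin (m + 3) → Bool))) with hKdef
  have hKiff : ∀ z : Fin (m + 3) → Bool, z ∉ K ↔ ∀ S ∈ F, z ∉ S := by
    intro z
    simp [hKdef, Set.mem_sUnion]
  have key : (∃ v : Fin (m + 3) → Bool, v ∉ K) ∧
      ∀ x y : Fin (m + 3) → Bool, x ∉ K → y ∉ K →
        ∃ w : (Q (m + 3)).Walk x y, w.length ≤ m + 4 ∧ ∀ z ∈ w.support, z ∉ K := by
    by_cases h0 : F.card = 0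
    · -- no faults
      have hF : F = ∅ := Finset.card_eq_zero.mp h0
      have hfree : ∀ z : Fin (m + 3) → Bool, z ∉ K := by
        intro z
        rw [hKiff]
        simp [hF]
      refine ⟨⟨fun _ => false, hfree _⟩, ?_⟩
      intro x y _ _
      obtain ⟨w, hw1, _⟩ := exists_geodesic (hammingDist x y) x y rfl
      refine ⟨w, ?_, fun z _ => hfree z⟩
      have : hammingDist x y ≤ m + 3 := by
        simpa using (hammingDist_le_card_fintype (x := x) (y := y))
      omega
    · by_cases h1 : F.card = 1
      · -- one faulty subcube
        obtain ⟨S, hF⟩ := Finset.card_eq_one.mp h1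
        obtain ⟨A, hA, p, hSp⟩ := hsub S (by simp [hF])
        have hA3 : 3 ≤ A.card := by omega
        obtain ⟨j, hj⟩ := Finset.card_pos.mp (show 0 < A.card by omega)
        have hK1 : ∀ z : Fin (m + 3) → Bool, z j ≠ p j → z ∉ K := by
          intro z hz
          rw [hKiff]
          intro S' hS'
          rw [hF, Finset.mem_singleton] at hS'
          subst hS'
          rw [hSp]
          intro hmem
          exact hz (hmem j hj)
        refine ⟨⟨flipBit p j, hK1 _ (by rw [flipBit_self]; exact (bool_ne_not_self _).symm)⟩, ?_⟩
        intro x y hx hy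
        obtain ⟨w, hw1, hw2⟩ := single (K := K) (by omega) j (p j) x y hK1 hx hy
        exact ⟨w, by omega, hw2⟩
      · -- two faulty subcubes
        have h2 : F.card = 2 := by omega
        obtain ⟨S, T, hST, hF⟩ := Finset.card_eq_two.mp h2
        obtain ⟨A, hA, p, hSp⟩ := hsub S (by simp [hF])
        obtain ⟨B, hB, q, hTq⟩ := hsub T (by simp [hF])
        have hd : Disjoint (Cube A p) (Cube B q) := by
          have := hdisj S (by simp [hF]) T (by simp [hF]) hST
          rw [hSp, hTq] at this
          exact this
        obtain ⟨c, hcA, hcB, hqc⟩ := exists_split hd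
        have hA3 : 3 ≤ A.card := by omega
        have hB3 : 3 ≤ B.card := by omega
        have hAe : 1 < (A.erase c).card := by
          rw [Finset.card_erase_of_mem hcA]
          omega
        obtain ⟨j₁, hj₁e, j₂, hj₂e, hj₁₂⟩ := Finset.one_lt_card.mp hAe
        have hj₁A : j₁ ∈ A := Finset.mem_of_mem_erase hj₁e
        have hj₂A : j₂ ∈ A := Finset.mem_of_mem_erase hj₂e
        have hj₁c : j₁ ≠ c := Finset.ne_of_mem_erase hj₁e
        have hj₂c : j₂ ≠ c := Finset.ne_of_mem_erase hj₂e
        obtain ⟨k, hke⟩ := Finset.card_pos.mp (show 0 < (B.erase c).card by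
          rw [Finset.card_erase_of_mem hcB]; omega)
        have hkB : k ∈ B := Finset.mem_of_mem_erase hke
        have hkc : k ≠ c := Finset.ne_of_mem_erase hke
        have hK2 : ∀ z : Fin (m + 3) → Bool, z ∉ Cube A p → z ∉ Cube B q → z ∉ K := by
          intro z hzS hzT
          rw [hKiff]
          intro S' hS'
          rw [hF, Finset.mem_insert, Finset.mem_singleton] at hS'
          rcases hS' with h | h <;> subst h
          · rw [hSp]; exact hzS
          · rw [hTq]; exact hzT
        have hwitS : flipBit p j₁ ∉ Cube A p := by
          intro hz
          have := mem_Cube.mp hz j₁ hj₁A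
          rw [flipBit_self] at this
          exact bool_ne_not_self _ this.symm
        have hwitT : flipBit p j₁ ∉ Cube B q := by
          intro hz
          have := mem_Cube.mp hz c hcB
          rw [flipBit_ne p (Ne.symm hj₁c), hqc] at this
          exact bool_ne_not_self _ this
        refine ⟨⟨flipBit p j₁, hK2 _ hwitS hwitT⟩, ?_⟩
        intro x y hx hy
        have hxS : x ∉ Cube A p := by
          have := (hKiff x).mp hx S (by simp [hF])
          rw [hSp] at this
          exact this
        have hxT : x ∉ Cube B q := by
          have := (hKiff x).mp hx T (by simp [hF])
          rw [hTq] at this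
          exact this
        have hyS : y ∉ Cube A p := by
          have := (hKiff y).mp hy S (by simp [hF])
          rw [hSp] at this
          exact this
        have hyT : y ∉ Cube B q := by
          have := (hKiff y).mp hy T (by simp [hF])
          rw [hTq] at this
          exact this
        by_cases hxc : x c = p c <;> by_cases hyc : y c = p c
        · -- both in the half avoiding `T`
          have hKh : ∀ z : Fin (m + 3) → Bool, z c = x c → z j₁ ≠ p j₁ → z ∉ K := by
            intro z hz1 hz2
            refine hK2 z ?_ ?_
            · intro hmem
              exact hz2 (mem_Cube.mp hmem j₁ hj₁A)
            · intro hmem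
              have := mem_Cube.mp hmem c hcB
              rw [hz1, hxc, hqc] at this
              exact bool_ne_not_self _ this
          obtain ⟨w, hw1, hw2⟩ := half (K := K) (by omega) c j₁ hj₁c (p j₁) x y
            (by rw [hxc, hyc]) hKh hx hy
          exact ⟨w, by omega, hw2⟩
        · -- `x` in the `p c` half, `y` in the other half
          have hyc' : y c = !p c := bool_ne_of_ne hyc
          obtain ⟨w, hw1, hw2⟩ := cross (K := K) (by omega) A B p q c j₁ j₂ hcA hcB hj₁A hj₂A
            hj₁c hj₂c hj₁₂ hqc x y hxc hyc' hxS hyT hK2 hx hy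
          exact ⟨w, by omega, hw2⟩
        · -- `y` in the `p c` half, `x` in the other half
          have hxc' : x c = !p c := bool_ne_of_ne hxc
          obtain ⟨w, hw1, hw2⟩ := cross (K := K) (by omega) A B p q c j₁ j₂ hcA hcB hj₁A hj₂A
            hj₁c hj₂c hj₁₂ hqc y x hyc hxc' hyS hxT hK2 hy hx
          refine ⟨w.reverse, by rw [Walk.length_reverse]; omega, ?_⟩
          intro z hz
          rw [Walk.support_reverse, List.mem_reverse] at hz
          exact hw2 z hz
        · -- both in the half avoiding `S`
          have hxc' : x c = !p c := bool_ne_of_ne hxc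
          have hyc' : y c = !p c := bool_ne_of_ne hyc
          have hKh : ∀ z : Fin (m + 3) → Bool, z c = x c → z k ≠ q k → z ∉ K := by
            intro z hz1 hz2
            refine hK2 z ?_ ?_
            · intro hmem
              have := mem_Cube.mp hmem c hcA
              rw [hz1, hxc'] at this
              exact bool_ne_not_self _ this.symm
            · intro hmem
              exact hz2 (mem_Cube.mp hmem k hkB)
          obtain ⟨w, hw1, hw2⟩ := half (K := K) (by omega) c k hkc (q k) x y
            (by rw [hxc', hyc']) hKh hx hy
          exact ⟨w, by omega, hw2⟩
  obtain ⟨⟨v, hv⟩, hkey⟩ := key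
  constructor
  · rw [connected_iff]
    refine ⟨?_, ⟨⟨v, hv⟩⟩⟩
    intro a b
    obtain ⟨w, _, hw⟩ := hkey a.1 b.1 a.2 b.2
    obtain ⟨w', _⟩ := lift w (fun z hz => hw z hz) a.2 b.2
    exact ⟨w'⟩
  · intro a b
    obtain ⟨w, hwlen, hw⟩ := hkey a.1 b.1 a.2 b.2
    obtain ⟨w', hw'len⟩ := lift w (fun z hz => hw z hz) a.2 b.2
    calc ((Q (m + 3)).induce Kᶜ).dist a b ≤ w'.length := SimpleGraph.dist_le w'
      _ ≤ w.length := hw'len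
      _ ≤ m + 4 := hwlen
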